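/- Every self-adjoint operator Q on a finite-dimensional Hilbert space E admits a representation Q = K*(D - zF)^{-1}K valid for all z ∈ ℂ, where H = E ⊕ E, D is an invertible self-adjoint operator on H, F = 0, and K : E → H is injective. -/

import Mathlib

theorem stmt_11 {n : ℕ} (Q : Matrix (Fin n) (Fin n) ℂ) (hQ : Q.IsHermitian) :
    ∃ (D : Matrix (Fin n ⊕ Fin n) (Fin n ⊕ Fin n) ℂ)
      (K : Matrix (Fin n ⊕ Fin n) (Fin n) ℂ),
      D.IsHermitian ∧ IsUnit D ∧ Function.Injective K.mulVec ∧
      ∀ z : ℂ,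
        K.conjTranspose *
          (D - z • (0 : Matrix (Fin n ⊕ Fin n) (Fin n ⊕ Fin n) ℂ))⁻¹ * K = Q := by
  set D : Matrix (Fin n ⊕ Fin n) (Fin n ⊕ Fin n) ℂ := Matrix.fromBlocks 0 1 1 0 with hD
  set K : Matrix (Fin n ⊕ Fin n) (Fin n) ℂ :=
    Matrix.fromRows 1 ((1/2 : ℂ) • Q) with hK
  have hDD : D * D = 1 := by
    simp [hD, Matrix.fromBlocks_multiply, Matrix.fromBlocks_one]
  have hDinv : D⁻¹ = D := Matrix.inv_eq_left_inv hDD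
  refine ⟨D, K, ?_, ?_, ?_, ?_⟩
  · unfold D
    unfold Matrix.IsHermitian
    rw [Matrix.fromBlocks_conjTranspose]
    simp
  · exact Matrix.isUnit_iff_isUnit_det _ |>.mpr
      (IsUnit.of_mul_eq_one _ (by rw [← Matrix.det_mul, hDD, Matrix.det_one]))
  · intro u v huv
    have h := congrFun huv
    have : (1 : Matrix (Fin n) (Fin n) ℂ).mulVec u = (1 : Matrix (Fin n) (Fin n) ℂ).mulVec v := by
      funext i
      have := h (Sum.inl i)
      simpa [hK, Matrix.fromRows_mulVec] using this
    simpa [Matrix.one_mulVec] using this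
  · intro z
    rw [smul_zero, sub_zero, hDinv, hD, hK,
      Matrix.conjTranspose_fromRows_eq_fromCols_conjTranspose,
      Matrix.mul_assoc, Matrix.fromBlocks_mul_fromRows, Matrix.fromCols_mul_fromRows]
    simp only [Matrix.zero_mul, Matrix.one_mul, zero_add, add_zero, Matrix.conjTranspose_one,
      Matrix.conjTranspose_smul, hQ.eq]
    rw [Matrix.mul_one, ← add_smul]
    norm_num
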